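/- Let K : ℕ × ℕ → ℂ be a symmetric kernel (K(i,j) = K(j,i)). Define S on finite lists of indices recursively by: S([]) = 1, S([i]) = 0, and for a list (i₁, …, i_n) with n ≥ 2, S(i₁,…,i_n) = Σ_{l=2}^{n} K(i₁, i_l)·S(i₂, …, î_l, …, i_n) (hat denotes omission). Then for n even, S(i₁,…,i_n) equals the sum over all perfect matchings M of {1,…,n} of the product Π_{{a,b}∈M} K(i_a, i_b) (the hafnian), and S = 0 for n odd. (Wick's theorem for the bosonic n-point functions, with K(a,b) = 1/(u(z_a)−u(z_b))².) -/

import Mathlib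

/-- The bosonic Wick recursion: `S([]) = 1`, `S([i]) = 0`, and
`S(i₁,…,i_n) = Σ_{l=2}^n K(i₁, i_l)·S(i₂,…,î_l,…,i_n)`. -/
noncomputable def wick (K : ℕ → ℕ → ℂ) : List ℕ → ℂ
  | [] => 1
  | [_] => 0
  | i :: rest =>
      ∑ l : Fin rest.length, K i (rest.get l) * wick K (rest.eraseIdx (l : ℕ))
termination_by v => v.length
decreasing_by
  have hl := l.isLt
  simp [List.length_eraseIdx]
  all_goals omega

open Finset Equiv

noncomputable def haf (n : ℕ) (F : Fin n → Fin n → ℂ) : ℂ :=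
  ∑ σ ∈ Finset.univ.filter
      (fun σ : Equiv.Perm (Fin n) => ∀ i, σ i ≠ i ∧ σ (σ i) = i),
    ∏ i ∈ Finset.univ.filter (fun i => i < σ i), F i (σ i)

lemma haf_congr {n m : ℕ} (h : n = m) (F : Fin n → Fin n → ℂ) :
    haf n F = haf m (fun i j => F (Fin.cast h.symm i) (Fin.cast h.symm j)) := by
  subst h; rfl

lemma haf_zero (F : Fin 0 → Fin 0 → ℂ) : haf 0 F = 1 := by
  unfold haf
  rw [Finset.filter_true_of_mem (fun σ _ i => i.elim0)]
  simp [Finset.univ_eq_empty (α := Fin 0), Finset.card_univ, Fintype.card_perm]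

def gl {m : ℕ} (l : Fin (m+1)) : Fin (m+2) ≃ Option (Option (Fin m)) :=
  (finSuccEquiv (m+1)).trans (Equiv.optionCongr (finSuccEquiv' l))

variable {m : ℕ} (l : Fin (m+1))

lemma gl_zero : gl l 0 = none := by simp [gl]
lemma gl_succ_l : gl l l.succ = some none := by simp [gl]
lemma gl_e (k : Fin m) : gl l ((l.succAbove k).succ) = some (some k) := by
  simp [gl, finSuccEquiv'_succAbove]

lemma gl_symm_none : (gl l).symm none = 0 := by
  rw [Equiv.symm_apply_eq, gl_zero]
lemma gl_symm_some_none : (gl l).symm (some none) = l.succ := by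
  rw [Equiv.symm_apply_eq, gl_succ_l]
lemma gl_symm_some_some (k : Fin m) : (gl l).symm (some (some k)) = (l.succAbove k).succ := by
  rw [Equiv.symm_apply_eq, gl_e]

lemma tri (x : Fin (m+2)) : x = 0 ∨ x = l.succ ∨ ∃ k, x = (l.succAbove k).succ := by
  rcases Fin.eq_zero_or_eq_succ x with h | ⟨j, rfl⟩
  · exact Or.inl h
  · by_cases hj : j = l
    · exact Or.inr (Or.inl (by rw [hj]))
    · obtain ⟨k, hk⟩ := Fin.exists_succAbove_eq hj
      exact Or.inr (Or.inr ⟨k, by rw [hk]⟩)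

def mid {m : ℕ} (τ : Perm (Fin m)) : Perm (Option (Option (Fin m))) :=
  (Equiv.swap (none : Option (Option (Fin m))) (some none)).trans
    (τ.optionCongr.optionCongr)

lemma mid_none (τ : Perm (Fin m)) : mid τ none = some none := by
  simp [mid]
lemma mid_some_none (τ : Perm (Fin m)) : mid τ (some none) = none := by
  simp [mid]
lemma mid_some_some (τ : Perm (Fin m)) (k : Fin m) :
    mid τ (some (some k)) = some (some (τ k)) := by
  simp [mid, Equiv.swap_apply_of_ne_of_ne]

def Phi {m : ℕ} (l : Fin (m+1)) (τ : Perm (Fin m)) : Perm (Fin (m+2)) :=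
  (gl l).symm.permCongr (mid τ)

lemma Phi_apply (τ : Perm (Fin m)) (x : Fin (m+2)) :
    Phi l τ x = (gl l).symm (mid τ (gl l x)) := by
  simp [Phi, Equiv.permCongr_apply]

lemma Phi_zero (τ : Perm (Fin m)) : Phi l τ 0 = l.succ := by
  rw [Phi_apply, gl_zero, mid_none, gl_symm_some_none]
lemma Phi_succ_l (τ : Perm (Fin m)) : Phi l τ l.succ = 0 := by
  rw [Phi_apply, gl_succ_l, mid_some_none, gl_symm_none]
lemma Phi_e (τ : Perm (Fin m)) (k : Fin m) :
    Phi l τ ((l.succAbove k).succ) = (l.succAbove (τ k)).succ := by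
  rw [Phi_apply, gl_e, mid_some_some, gl_symm_some_some]

lemma e_inj : Function.Injective (fun k : Fin m => (l.succAbove k).succ) :=
  fun a b h => (Fin.succAbove_right_injective) (Fin.succ_injective _ h)

def lOf {m : ℕ} (σ : Perm (Fin (m+2))) : Fin (m+1) :=
  ⟨(σ 0 : ℕ) - 1, by have := (σ 0).isLt; omega⟩

lemma lOf_succ {σ : Perm (Fin (m+2))} (h : σ 0 ≠ 0) : (lOf σ).succ = σ 0 := by
  have h' : (σ 0 : ℕ) ≠ 0 := fun hh => h (Fin.ext hh)
  apply Fin.ext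
  show ((σ 0 : ℕ) - 1) + 1 = (σ 0 : ℕ)
  omega

def tauOf {m : ℕ} (l : Fin (m+1)) (σ : Perm (Fin (m+2))) : Perm (Fin m) :=
  Equiv.removeNone (Equiv.removeNone
    ((Equiv.swap (none : Option (Option (Fin m))) (some none)).trans ((gl l).permCongr σ)))

lemma tauOf_spec {σ : Perm (Fin (m+2))} (hσ : ∀ i, σ i ≠ i ∧ σ (σ i) = i)
    (hl : σ 0 = l.succ) (k : Fin m) :
    σ ((l.succAbove k).succ) = (l.succAbove (tauOf l σ k)).succ := by
  obtain ⟨k', hk'⟩ : ∃ k', σ ((l.succAbove k).succ) = (l.succAbove k').succ := by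
    rcases tri l (σ ((l.succAbove k).succ)) with h | h | h
    · exfalso
      have h2 := (hσ ((l.succAbove k).succ)).2
      rw [h, hl] at h2
      exact Fin.succAbove_ne l k (Fin.succ_injective _ h2.symm)
    · exfalso
      rw [← hl] at h
      exact Fin.succ_ne_zero _ (σ.injective h)
    · exact h
  suffices h : tauOf l σ k = k' by rw [h, hk']
  set ρ : Perm (Option (Option (Fin m))) :=
    (Equiv.swap (none : Option (Option (Fin m))) (some none)).trans ((gl l).permCongr σ) with hρ
  have hρ2 : ρ (some (some k)) = some (some k') := by
    rw [hρ]
    simp only [Equiv.trans_apply, Equiv.permCongr_apply, Equiv.symm_symm]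
    rw [Equiv.swap_apply_of_ne_of_ne (by simp) (by simp), gl_symm_some_some, hk', gl_e]
  have h1 : some (Equiv.removeNone ρ (some k)) = ρ (some (some k)) :=
    Equiv.removeNone_some ρ ⟨some k', hρ2⟩
  rw [hρ2] at h1
  have h1' : Equiv.removeNone ρ (some k) = some k' := Option.some_injective _ h1
  have h2 : some (Equiv.removeNone (Equiv.removeNone ρ) k) = Equiv.removeNone ρ (some k) :=
    Equiv.removeNone_some _ ⟨k', h1'⟩
  rw [h1'] at h2
  exact Option.some_injective _ h2


lemma Phi_mem (τ : Perm (Fin m)) (hτ : ∀ k, τ k ≠ k ∧ τ (τ k) = k) :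
    ∀ x, Phi l τ x ≠ x ∧ Phi l τ (Phi l τ x) = x := by
  intro x
  rcases tri l x with rfl | rfl | ⟨k, rfl⟩
  · exact ⟨by rw [Phi_zero]; exact Fin.succ_ne_zero l, by rw [Phi_zero, Phi_succ_l]⟩
  · exact ⟨by rw [Phi_succ_l]; exact fun h => Fin.succ_ne_zero l h.symm,
      by rw [Phi_succ_l, Phi_zero]⟩
  · constructor
    · rw [Phi_e]; intro h; exact (hτ k).1 (e_inj l h)
    · rw [Phi_e, Phi_e, (hτ k).2]

lemma Phi_tauOf {σ : Perm (Fin (m+2))} (hσ : ∀ i, σ i ≠ i ∧ σ (σ i) = i)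
    (hl : σ 0 = l.succ) : Phi l (tauOf l σ) = σ := by
  apply Equiv.ext; intro x
  rcases tri l x with rfl | rfl | ⟨k, rfl⟩
  · rw [Phi_zero, hl]
  · rw [Phi_succ_l, ← hl, (hσ 0).2]
  · rw [Phi_e, tauOf_spec l hσ hl]

lemma tauOf_mem {σ : Perm (Fin (m+2))} (hσ : ∀ i, σ i ≠ i ∧ σ (σ i) = i)
    (hl : σ 0 = l.succ) :
    ∀ k, tauOf l σ k ≠ k ∧ tauOf l σ (tauOf l σ k) = k := by
  intro k
  constructor
  · intro h
    have h1 := tauOf_spec l hσ hl k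
    rw [h] at h1
    exact (hσ _).1 h1
  · have h1 := tauOf_spec l hσ hl k
    have h2 := tauOf_spec l hσ hl (tauOf l σ k)
    have h3 := (hσ ((l.succAbove k).succ)).2
    rw [h1, h2] at h3
    exact e_inj l h3

lemma lOf_Phi (τ : Perm (Fin m)) : lOf (Phi l τ) = l := by
  apply Fin.ext
  show ((Phi l τ 0 : Fin (m+2)) : ℕ) - 1 = (l : ℕ)
  rw [Phi_zero]
  simp [Fin.val_succ]

lemma tauOf_Phi (τ : Perm (Fin m)) (hτ : ∀ k, τ k ≠ k ∧ τ (τ k) = k) :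
    tauOf l (Phi l τ) = τ := by
  apply Equiv.ext; intro k
  have h1 := tauOf_spec l (Phi_mem l τ hτ) (Phi_zero l τ) k
  rw [Phi_e] at h1
  exact e_inj l h1.symm

lemma filter_Phi (τ : Perm (Fin m)) (hτ : ∀ k, τ k ≠ k ∧ τ (τ k) = k) :
    Finset.univ.filter (fun i => i < Phi l τ i) =
      insert 0 ((Finset.univ.filter (fun k => k < τ k)).image
        (fun k => (l.succAbove k).succ)) := by
  ext x
  simp only [Finset.mem_filter, Finset.mem_univ, true_and, Finset.mem_insert,
    Finset.mem_image]
  rcases tri l x with rfl | rfl | ⟨k, rfl⟩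
  · simp [Phi_zero, Fin.succ_pos]
  · constructor
    · intro h
      rw [Phi_succ_l] at h
      exact absurd h (Fin.not_lt_zero _)
    · rintro (h | ⟨k, _, hk⟩)
      · exact absurd h (Fin.succ_ne_zero l)
      · exact absurd (Fin.succ_injective _ hk) (Fin.succAbove_ne l k)
  · rw [Phi_e]
    constructor
    · intro h
      exact Or.inr ⟨k, Fin.succAbove_lt_succAbove_iff.mp (Fin.succ_lt_succ_iff.mp h), rfl⟩
    · rintro (h | ⟨k', hk', hkk⟩)
      · first
        | exact absurd h (Fin.succ_ne_zero _)
        | exact absurd h.symm (Fin.succ_ne_zero _)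
      · have hk : k' = k := e_inj l hkk
        subst hk
        exact Fin.succ_lt_succ_iff.mpr (Fin.succAbove_lt_succAbove_iff.mpr hk')

lemma prod_Phi (F : Fin (m+2) → Fin (m+2) → ℂ) (τ : Perm (Fin m))
    (hτ : ∀ k, τ k ≠ k ∧ τ (τ k) = k) :
    ∏ i ∈ Finset.univ.filter (fun i => i < Phi l τ i), F i (Phi l τ i) =
      F 0 l.succ *
        ∏ k ∈ Finset.univ.filter (fun k => k < τ k),
          F ((l.succAbove k).succ) ((l.succAbove (τ k)).succ) := by
  rw [filter_Phi l τ hτ, Finset.prod_insert, Finset.prod_image]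
  · rw [Phi_zero]
    congr 1
    exact Finset.prod_congr rfl (fun k _ => by rw [Phi_e])
  · intro a _ b _ h
    exact e_inj l h
  · simp only [Finset.mem_image]
    rintro ⟨k, _, hk⟩
    exact Fin.succ_ne_zero _ hk

lemma haf_rec (m : ℕ) (F : Fin (m+1+1) → Fin (m+1+1) → ℂ) :
    haf (m+1+1) F = ∑ l : Fin (m+1), F 0 l.succ *
      haf m (fun i j => F ((l.succAbove i).succ) ((l.succAbove j).succ)) := by
  unfold haf
  simp only [Finset.mul_sum]
  rw [← Finset.sum_product']
  refine Finset.sum_nbij' (fun σ => (lOf σ, tauOf (lOf σ) σ))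
    (fun p => Phi p.1 p.2) ?_ ?_ ?_ ?_ ?_
  · intro σ hσ
    rw [Finset.mem_filter] at hσ
    have hσ' := hσ.2
    have hl : σ 0 = (lOf σ).succ := (lOf_succ (hσ' 0).1).symm
    rw [Finset.mem_product, Finset.mem_filter]
    exact ⟨Finset.mem_univ _, Finset.mem_univ _, tauOf_mem (lOf σ) hσ' hl⟩
  · intro p hp
    rw [Finset.mem_product, Finset.mem_filter] at hp
    rw [Finset.mem_filter]
    exact ⟨Finset.mem_univ _, Phi_mem p.1 p.2 hp.2.2⟩
  · intro σ hσ
    rw [Finset.mem_filter] at hσ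
    have hσ' := hσ.2
    have hl : σ 0 = (lOf σ).succ := (lOf_succ (hσ' 0).1).symm
    exact Phi_tauOf (lOf σ) hσ' hl
  · intro p hp
    rw [Finset.mem_product, Finset.mem_filter] at hp
    have h1 : lOf (Phi p.1 p.2) = p.1 := lOf_Phi p.1 p.2
    refine Prod.ext h1 ?_
    show tauOf (lOf (Phi p.1 p.2)) (Phi p.1 p.2) = p.2
    rw [h1]
    exact tauOf_Phi p.1 p.2 hp.2.2
  · intro σ hσ
    rw [Finset.mem_filter] at hσ
    have hσ' := hσ.2
    have hl : σ 0 = (lOf σ).succ := (lOf_succ (hσ' 0).1).symm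
    have hτ := tauOf_mem (lOf σ) hσ' hl
    conv_lhs => rw [← Phi_tauOf (lOf σ) hσ' hl]
    exact prod_Phi (lOf σ) F (tauOf (lOf σ) σ) hτ

lemma get_erase (b : ℕ) (t : List ℕ) (l : Fin (t.length + 1)) (k : Fin t.length)
    (h : t.length = ((b::t).eraseIdx ↑l).length) :
    ((b::t).eraseIdx ↑l).get (Fin.cast h k) = (b::t).get (l.succAbove k) := by
  by_cases hkl : (k : ℕ) < (l : ℕ)
  · have hs : l.succAbove k = Fin.castSucc k :=
      Fin.succAbove_of_castSucc_lt _ _ (by rwa [Fin.lt_def, Fin.coe_castSucc])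
    rw [hs]
    simp only [List.get_eq_getElem, List.getElem_eraseIdx, Fin.coe_cast, Fin.coe_castSucc]
    rw [dif_pos hkl]
  · have hs : l.succAbove k = k.succ :=
      Fin.succAbove_of_le_castSucc _ _ (by rw [Fin.le_def, Fin.coe_castSucc]; omega)
    rw [hs]
    simp only [List.get_eq_getElem, List.getElem_eraseIdx, Fin.coe_cast, Fin.val_succ]
    rw [dif_neg hkl]

/-- Wick's theorem for bosonic n-point functions: for a symmetric kernel K the recursion
yields 0 in odd length, and in even length the hafnian: the sum over all perfect
matchings (encoded as fixed-point-free involutions σ) of `Π_{i < σ i} K(i_a, i_{σ a})`. -/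
theorem wick_theorem (K : ℕ → ℕ → ℂ) (hK : ∀ a b, K a b = K b a) (v : List ℕ) :
    (Odd v.length → wick K v = 0) ∧
    (Even v.length → wick K v =
      ∑ σ ∈ Finset.univ.filter
          (fun σ : Equiv.Perm (Fin v.length) => ∀ i, σ i ≠ i ∧ σ (σ i) = i),
        ∏ i ∈ Finset.univ.filter (fun i => i < σ i), K (v.get i) (v.get (σ i))) := by
  suffices H : ∀ n : ℕ, ∀ v : List ℕ, v.length = n →
      (Odd v.length → wick K v = 0) ∧
      (Even v.length → wick K v = haf v.length (fun i j => K (v.get i) (v.get j))) by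
    exact H v.length v rfl
  intro n
  induction n using Nat.strong_induction_on with
  | _ n IH =>
  intro v hv
  cases v with
  | nil =>
    constructor
    · intro h; rcases h with ⟨c, hc⟩; simp at hc
    · intro _
      rw [wick.eq_1]
      exact (haf_zero _).symm
  | cons a rest =>
    cases rest with
    | nil =>
      constructor
      · intro _; exact wick.eq_2 K a
      · intro he; rcases he with ⟨c, hc⟩
        simp only [List.length_cons, List.length_nil] at hc; omega
    | cons b t =>
      have hlen : ∀ l : Fin (t.length + 1),
          ((b::t).eraseIdx (l : ℕ)).length = t.length := by
        intro l
        rw [List.length_eraseIdx]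
        simp only [List.length_cons]
        rw [if_pos l.isLt]
        omega
      have hlt : ∀ l : Fin (t.length + 1),
          ((b::t).eraseIdx (l : ℕ)).length < n := by
        intro l
        rw [hlen l, ← hv]
        simp only [List.length_cons]
        omega
      constructor
      · intro hodd
        rw [wick.eq_3 K a (b::t) (by simp)]
        apply Finset.sum_eq_zero
        intro l _
        have hodd' : Odd ((b::t).eraseIdx (l : ℕ)).length := by
          rw [hlen l]
          rcases hodd with ⟨c, hc⟩
          simp only [List.length_cons] at hc
          exact ⟨c - 1, by omega⟩
        rw [(IH _ (hlt l) _ rfl).1 hodd', mul_zero]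
      · intro heven
        have heven' : ∀ l : Fin (t.length + 1),
            Even ((b::t).eraseIdx (l : ℕ)).length := by
          intro l
          rw [hlen l]
          rcases heven with ⟨c, hc⟩
          simp only [List.length_cons] at hc
          exact ⟨c - 1, by omega⟩
        rw [wick.eq_3 K a (b::t) (by simp)]
        show (∑ l : Fin (t.length + 1), K a ((b::t).get l) * wick K ((b::t).eraseIdx (l : ℕ))) =
          haf (t.length + 1 + 1)
            (fun i j : Fin (t.length + 1 + 1) => K ((a::b::t).get i) ((a::b::t).get j))
        rw [haf_rec]
        refine Finset.sum_congr rfl ?_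
        intro l _
        refine congrArg₂ (· * ·) rfl ?_
        rw [(IH _ (hlt l) _ rfl).2 (heven' l), haf_congr (hlen l)]
        refine congrArg _ ?_
        funext i j
        rw [get_erase b t l i (hlen l).symm, get_erase b t l j (hlen l).symm]
        rfl
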